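/- Funnel is superadditive under vertical concatenation: if P = P₁ ∪ P₂ are finite point sets with distinct y-coordinates such that every point of P₁ has strictly smaller y-coordinate than every point of P₂, then Funnel(P) ≥ Funnel(P₁) + Funnel(P₂). -/

import Mathlib

/-- Number of maximal blocks of equal symbols in a string over `{L,R}` (as `Bool`s). -/
def blocks : List Bool → ℕ
  | [] => 0
  | [_] => 1
  | a :: b :: l => (if a = b then 0 else 1) + blocks (b :: l)

/-- The labeled merge of two finite sets of reals: sort `L ∪ R` increasingly and
label each element by whether it came from `L` (`true`) or not. -/
noncomputable def mix (L R : Finset ℝ) : List Bool :=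
  ((L ∪ R).sort (· ≤ ·)).map (fun x => decide (x ∈ L))

/-- `mixValue L R` is the number of maximal same-origin blocks in the merged sorted sequence. -/
noncomputable def mixValue (L R : Finset ℝ) : ℕ := blocks (mix L R)
/-- Membership in the minimal axis-aligned rectangle spanned by `p` and `q`. -/
def inRect (p q t : ℝ × ℝ) : Prop :=
  min p.1 q.1 ≤ t.1 ∧ t.1 ≤ max p.1 q.1 ∧ min p.2 q.2 ≤ t.2 ∧ t.2 ≤ max p.2 q.2

noncomputable instance (p q t : ℝ × ℝ) : Decidable (inRect p q t) := by
  unfold inRect; infer_instance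

/-- The left funnel of `p` within `P`. -/
noncomputable def FL (P : Finset (ℝ × ℝ)) (p : ℝ × ℝ) : Finset (ℝ × ℝ) :=
  P.filter (fun q => q.2 < p.2 ∧ q.1 < p.1 ∧ ∀ t ∈ P, inRect p q t → t = p ∨ t = q)

/-- The right funnel of `p` within `P`. -/
noncomputable def FR (P : Finset (ℝ × ℝ)) (p : ℝ × ℝ) : Finset (ℝ × ℝ) :=
  P.filter (fun q => q.2 < p.2 ∧ q.1 > p.1 ∧ ∀ t ∈ P, inRect p q t → t = p ∨ t = q)

/-- The funnel contribution `f(P,p)`. -/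
noncomputable def fContrib (P : Finset (ℝ × ℝ)) (p : ℝ × ℝ) : ℕ :=
  mixValue ((FL P p).image Prod.snd) ((FR P p).image Prod.snd)

/-- Wilber's Funnel bound. -/
noncomputable def Funnel (P : Finset (ℝ × ℝ)) : ℕ := ∑ p ∈ P, fContrib P p

/-- All points of `P` have distinct `y`-coordinates. -/
def DistinctY (P : Finset (ℝ × ℝ)) : Prop :=
  ∀ p ∈ P, ∀ q ∈ P, p.2 = q.2 → p = q

/-- All points of `P` have distinct `x`-coordinates. -/
def DistinctX (P : Finset (ℝ × ℝ)) : Prop :=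
  ∀ p ∈ P, ∀ q ∈ P, p.1 = q.1 → p = q

lemma blocks_cons_ge (a : Bool) (l : List Bool) : blocks l ≤ blocks (a :: l) := by
  cases l with
  | nil => simp [blocks]
  | cons b l => simp only [blocks]; omega

lemma blocks_append_ge (A B : List Bool) : blocks B ≤ blocks (A ++ B) := by
  induction A with
  | nil => simp
  | cons a A ih => exact le_trans ih (by simpa using blocks_cons_ge a (A ++ B))

lemma sort_union_of_lt (A B : Finset ℝ) (h : ∀ a ∈ A, ∀ b ∈ B, a < b) :
    (A ∪ B).sort (· ≤ ·) = A.sort (· ≤ ·) ++ B.sort (· ≤ ·) := by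
  have hdisj : Disjoint A B := by
    rw [Finset.disjoint_left]
    intro a ha hb
    exact absurd (h a ha a hb) (lt_irrefl _)
  refine (fun hp hs => List.Perm.eq_of_pairwise' (r := ((· ≤ ·) : ℝ → ℝ → Prop)) (Finset.pairwise_sort _ _) hs hp) ?_ ?_
  · rw [← Multiset.coe_eq_coe]
    show (((A ∪ B).sort (· ≤ ·) : List ℝ) : Multiset ℝ) = ((A.sort (· ≤ ·) ++ B.sort (· ≤ ·) : List ℝ) : Multiset ℝ)
    rw [← Multiset.coe_add, Finset.sort_eq, Finset.sort_eq, Finset.sort_eq,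
      ← Finset.disjUnion_eq_union A B hdisj]
    rfl
  · rw [List.pairwise_append]
    refine ⟨Finset.pairwise_sort _ _, Finset.pairwise_sort _ _, ?_⟩
    intro a ha b hb
    exact (h a (by simpa using (Finset.mem_sort _).mp ha)
      b (by simpa using (Finset.mem_sort _).mp hb)).le

lemma mix_split (L₁ R₁ L₂ R₂ : Finset ℝ)
    (h : ∀ a ∈ L₁ ∪ R₁, ∀ b ∈ L₂ ∪ R₂, a < b) :
    ∃ A, mix (L₁ ∪ L₂) (R₁ ∪ R₂) = A ++ mix L₂ R₂ := by
  refine ⟨((L₁ ∪ R₁).sort (· ≤ ·)).map (fun x => decide (x ∈ L₁ ∪ L₂)), ?_⟩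
  unfold mix
  rw [Finset.union_union_union_comm, sort_union_of_lt _ _ h, List.map_append]
  congr 1
  apply List.map_congr_left
  intro x hx
  have hx2 : x ∈ L₂ ∪ R₂ := (Finset.mem_sort _).mp hx
  apply decide_eq_decide.mpr
  simp only [Finset.mem_union]
  constructor
  · rintro (h1 | h2)
    · exact absurd (h x (Finset.mem_union_left _ h1) x hx2) (lt_irrefl _)
    · exact h2
  · exact Or.inr

lemma FL_left (P₁ P₂ : Finset (ℝ × ℝ)) (hy : ∀ p ∈ P₁, ∀ q ∈ P₂, p.2 < q.2)
    (p : ℝ × ℝ) (hp : p ∈ P₁) : FL (P₁ ∪ P₂) p = FL P₁ p := by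
  ext q
  simp only [FL, Finset.mem_filter, Finset.mem_union]
  constructor
  · rintro ⟨hq | hq, h1, h2, h3⟩
    · exact ⟨hq, h1, h2, fun t ht hr => h3 t (Or.inl ht) hr⟩
    · exact absurd (hy p hp q hq) (not_lt.mpr h1.le)
  · rintro ⟨hq, h1, h2, h3⟩
    refine ⟨Or.inl hq, h1, h2, ?_⟩
    rintro t (ht | ht) hr
    · exact h3 t ht hr
    · have h4 := hr.2.2.2
      rw [max_eq_left h1.le] at h4
      exact absurd (hy p hp t ht) (not_lt.mpr h4)

lemma FR_left (P₁ P₂ : Finset (ℝ × ℝ)) (hy : ∀ p ∈ P₁, ∀ q ∈ P₂, p.2 < q.2)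
    (p : ℝ × ℝ) (hp : p ∈ P₁) : FR (P₁ ∪ P₂) p = FR P₁ p := by
  ext q
  simp only [FR, Finset.mem_filter, Finset.mem_union]
  constructor
  · rintro ⟨hq | hq, h1, h2, h3⟩
    · exact ⟨hq, h1, h2, fun t ht hr => h3 t (Or.inl ht) hr⟩
    · exact absurd (hy p hp q hq) (not_lt.mpr h1.le)
  · rintro ⟨hq, h1, h2, h3⟩
    refine ⟨Or.inl hq, h1, h2, ?_⟩
    rintro t (ht | ht) hr
    · exact h3 t ht hr
    · have h4 := hr.2.2.2
      rw [max_eq_left h1.le] at h4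
      exact absurd (hy p hp t ht) (not_lt.mpr h4)

lemma FL_right (P₁ P₂ : Finset (ℝ × ℝ)) (hy : ∀ p ∈ P₁, ∀ q ∈ P₂, p.2 < q.2)
    (p : ℝ × ℝ) : FL (P₁ ∪ P₂) p = (FL (P₁ ∪ P₂) p ∩ P₁) ∪ FL P₂ p := by
  ext q
  simp only [Finset.mem_union, Finset.mem_inter]
  constructor
  · intro hq
    have hq' := hq
    rw [FL, Finset.mem_filter] at hq'
    obtain ⟨hmem, h1, h2, h3⟩ := hq'
    rcases Finset.mem_union.mp hmem with hq1 | hq2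
    · exact Or.inl ⟨hq, hq1⟩
    · exact Or.inr (Finset.mem_filter.mpr
        ⟨hq2, h1, h2, fun t ht hr => h3 t (Finset.mem_union_right _ ht) hr⟩)
  · rintro (⟨hq, _⟩ | hq)
    · exact hq
    · rw [FL, Finset.mem_filter] at hq ⊢
      obtain ⟨hq2, h1, h2, h3⟩ := hq
      refine ⟨Finset.mem_union_right _ hq2, h1, h2, ?_⟩
      rintro t ht hr
      rcases Finset.mem_union.mp ht with ht1 | ht2
      · have h4 := hr.2.2.1
        rw [min_eq_right h1.le] at h4
        exact absurd (hy t ht1 q hq2) (not_lt.mpr h4)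
      · exact h3 t ht2 hr

lemma FR_right (P₁ P₂ : Finset (ℝ × ℝ)) (hy : ∀ p ∈ P₁, ∀ q ∈ P₂, p.2 < q.2)
    (p : ℝ × ℝ) : FR (P₁ ∪ P₂) p = (FR (P₁ ∪ P₂) p ∩ P₁) ∪ FR P₂ p := by
  ext q
  simp only [Finset.mem_union, Finset.mem_inter]
  constructor
  · intro hq
    have hq' := hq
    rw [FR, Finset.mem_filter] at hq'
    obtain ⟨hmem, h1, h2, h3⟩ := hq'
    rcases Finset.mem_union.mp hmem with hq1 | hq2
    · exact Or.inl ⟨hq, hq1⟩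
    · exact Or.inr (Finset.mem_filter.mpr
        ⟨hq2, h1, h2, fun t ht hr => h3 t (Finset.mem_union_right _ ht) hr⟩)
  · rintro (⟨hq, _⟩ | hq)
    · exact hq
    · rw [FR, Finset.mem_filter] at hq ⊢
      obtain ⟨hq2, h1, h2, h3⟩ := hq
      refine ⟨Finset.mem_union_right _ hq2, h1, h2, ?_⟩
      rintro t ht hr
      rcases Finset.mem_union.mp ht with ht1 | ht2
      · have h4 := hr.2.2.1
        rw [min_eq_right h1.le] at h4
        exact absurd (hy t ht1 q hq2) (not_lt.mpr h4)
      · exact h3 t ht2 hr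

lemma fContrib_left (P₁ P₂ : Finset (ℝ × ℝ)) (hy : ∀ p ∈ P₁, ∀ q ∈ P₂, p.2 < q.2)
    (p : ℝ × ℝ) (hp : p ∈ P₁) : fContrib (P₁ ∪ P₂) p = fContrib P₁ p := by
  unfold fContrib
  rw [FL_left P₁ P₂ hy p hp, FR_left P₁ P₂ hy p hp]

lemma fContrib_right (P₁ P₂ : Finset (ℝ × ℝ)) (hy : ∀ p ∈ P₁, ∀ q ∈ P₂, p.2 < q.2)
    (p : ℝ × ℝ) : fContrib P₂ p ≤ fContrib (P₁ ∪ P₂) p := by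
  unfold fContrib mixValue
  rw [FL_right P₁ P₂ hy p, FR_right P₁ P₂ hy p, Finset.image_union, Finset.image_union]
  have hlt : ∀ a ∈ (FL (P₁ ∪ P₂) p ∩ P₁).image Prod.snd ∪ (FR (P₁ ∪ P₂) p ∩ P₁).image Prod.snd,
      ∀ b ∈ (FL P₂ p).image Prod.snd ∪ (FR P₂ p).image Prod.snd, a < b := by
    intro a ha b hb
    simp only [Finset.mem_union, Finset.mem_image] at ha hb
    rcases ha with ⟨t, ht, rfl⟩ | ⟨t, ht, rfl⟩ <;>
    rcases hb with ⟨s, hs, rfl⟩ | ⟨s, hs, rfl⟩ <;>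
    exact hy t (Finset.mem_inter.mp ht).2 s (Finset.mem_filter.mp hs).1
  obtain ⟨A, hA⟩ := mix_split ((FL (P₁ ∪ P₂) p ∩ P₁).image Prod.snd)
    ((FR (P₁ ∪ P₂) p ∩ P₁).image Prod.snd)
    ((FL P₂ p).image Prod.snd) ((FR P₂ p).image Prod.snd) hlt
  rw [hA]
  exact blocks_append_ge _ _


theorem funnel_superadditive_concat (P P₁ P₂ : Finset (ℝ × ℝ))
    (hunion : P = P₁ ∪ P₂)
    (hy : ∀ p ∈ P₁, ∀ q ∈ P₂, p.2 < q.2)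
    (hY : DistinctY P) :
    Funnel P ≥ Funnel P₁ + Funnel P₂ := by
  have hdisj : Disjoint P₁ P₂ := Finset.disjoint_left.mpr
    fun a h1 h2 => absurd (hy a h1 a h2) (lt_irrefl _)
  subst hunion
  rw [ge_iff_le]
  unfold Funnel
  rw [Finset.sum_union hdisj]
  apply Nat.add_le_add
  · exact Finset.sum_le_sum fun p hp => le_of_eq (fContrib_left P₁ P₂ hy p hp).symm
  · exact Finset.sum_le_sum fun p hp => fContrib_right P₁ P₂ hy p
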